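/- Let X be an object of an abelian category satisfying the bi-chain condition. Then X is indecomposable if and only if its endomorphism ring End(X) is a local ring. -/

import Mathlib

open CategoryTheory CategoryTheory.Limits

attribute [local instance] CategoryTheory.Abelian.hasFiniteBiproducts
attribute [local instance] CategoryTheory.Limits.hasBinaryBiproducts_of_finite_biproducts

universe v u

/-- An object `X` satisfies the *bi-chain condition* if for every bi-chain
`X_n ⟶ X_{n+1} ⟶ X_n` (with the `α n` epimorphisms and the `β n` monomorphisms)
starting at `X₀ = X`, all `α n` and `β n` are isomorphisms for large enough `n`. -/
def BichainCondition {A : Type u} [Category.{v} A] (X : A) : Prop :=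
  ∀ (obj : ℕ → A) (α : ∀ n, obj n ⟶ obj (n + 1)) (β : ∀ n, obj (n + 1) ⟶ obj n),
    obj 0 = X → (∀ n, Epi (α n)) → (∀ n, Mono (β n)) →
    ∃ n₀ : ℕ, ∀ n, n₀ ≤ n → IsIso (α n) ∧ IsIso (β n)

section Aux

variable {A : Type u} [Category.{v} A] [Abelian A]

/-- An idempotent endomorphism of an indecomposable object in an abelian category is
`0` or the identity. -/
theorem aux_idem_eq_zero_or_id {X : A} (hX : Indecomposable X) (e : X ⟶ X)
    (he : e ≫ e = e) : e = 0 ∨ e = 𝟙 X := by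
  have h1 : e ≫ (𝟙 X - e) = 0 := by
    simp [Preadditive.comp_sub, he]
  have h2 : (𝟙 X - e) ≫ e = 0 := by
    simp [Preadditive.sub_comp, he]
  have hY : kernel.ι (𝟙 X - e) ≫ e = kernel.ι (𝟙 X - e) := by
    have := kernel.condition (𝟙 X - e)
    rw [Preadditive.comp_sub, Category.comp_id, sub_eq_zero] at this
    exact this.symm
  have hZ : kernel.ι e ≫ e = 0 := kernel.condition e
  let i : X ≅ kernel (𝟙 X - e) ⊞ kernel e :=
  { hom := biprod.lift (kernel.lift _ e h1) (kernel.lift _ (𝟙 X - e) h2)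
    inv := biprod.desc (kernel.ι _) (kernel.ι _)
    hom_inv_id := by
      rw [biprod.lift_desc, kernel.lift_ι, kernel.lift_ι]
      simp
    inv_hom_id := by
      apply biprod.hom_ext' <;> apply biprod.hom_ext <;>
        simp only [Category.assoc, biprod.lift_fst, biprod.lift_snd,
          biprod.inl_desc_assoc, biprod.inr_desc_assoc,
          biprod.inl_fst, biprod.inl_snd, biprod.inr_fst, biprod.inr_snd,
          Category.comp_id]
      · rw [← cancel_mono (kernel.ι (𝟙 X - e))]
        simp [hY]
      · rw [← cancel_mono (kernel.ι e)]
        simp [Preadditive.comp_sub, hY]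
      · rw [← cancel_mono (kernel.ι (𝟙 X - e))]
        simp [hZ]
      · rw [← cancel_mono (kernel.ι e)]
        simp [Preadditive.comp_sub, hZ] }
  rcases hX.2 _ _ i with hz | hz
  · left
    have : e = kernel.lift _ e h1 ≫ kernel.ι (𝟙 X - e) := (kernel.lift_ι _ _ _).symm
    rw [this, hz.eq_of_src (kernel.ι (𝟙 X - e)) 0, comp_zero]
  · right
    have : 𝟙 X - e = kernel.lift _ (𝟙 X - e) h2 ≫ kernel.ι e := (kernel.lift_ι _ _ _).symm
    rw [hz.eq_of_src (kernel.ι e) 0, comp_zero] at this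
    rw [sub_eq_zero] at this
    exact this.symm

private noncomputable def fObj {X : A} (f : End X) : ℕ → A
  | 0 => X
  | (n + 1) => image ((f ^ (n + 1) : End X) : X ⟶ X)

private noncomputable def fι {X : A} (f : End X) : ∀ n, fObj f n ⟶ X
  | 0 => 𝟙 X
  | (n + 1) => image.ι ((f ^ (n + 1) : End X) : X ⟶ X)

private noncomputable def fp {X : A} (f : End X) : ∀ n, X ⟶ fObj f n
  | 0 => 𝟙 X
  | (n + 1) => factorThruImage ((f ^ (n + 1) : End X) : X ⟶ X)

private theorem mono_fι {X : A} (f : End X) (n : ℕ) : Mono (fι f n) := by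
  cases n <;> dsimp only [fι, fObj] <;> infer_instance

private theorem epi_fp {X : A} (f : End X) (n : ℕ) : Epi (fp f n) := by
  cases n <;> dsimp only [fp, fObj] <;> infer_instance

private theorem fp_fι {X : A} (f : End X) (n : ℕ) :
    fp f n ≫ fι f n = ((f ^ n : End X) : X ⟶ X) := by
  cases n with
  | zero => simp [fp, fι, pow_zero]; exact Category.comp_id _
  | succ n => exact image.fac _

/-- The key Fitting-type consequence of the bi-chain condition. -/
theorem aux_isUnit_or {X : A} (h : BichainCondition X) (hX : Indecomposable X)
    (f : End X) : IsUnit f ∨ IsUnit (1 - f) := by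
  haveI := fun n => mono_fι f n
  haveI := fun n => epi_fp f n
  -- the monomorphisms of the bi-chain
  have hpow : ∀ n : ℕ, ((f ^ (n + 1) : End X) : X ⟶ X)
      = ((f : X ⟶ X) ≫ fp f n) ≫ fι f n := by
    intro n
    rw [Category.assoc, fp_fι, pow_succ, End.mul_def]
  let β : ∀ n, fObj f (n + 1) ⟶ fObj f n := fun n =>
    image.lift ⟨fObj f n, fι f n, (f : X ⟶ X) ≫ fp f n, (hpow n).symm⟩
  have hβι : ∀ n, β n ≫ fι f n = fι f (n + 1) := fun n => image.lift_fac _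
  have hβ : ∀ n, Mono (β n) := by
    intro n
    have : Mono (β n ≫ fι f n) := by rw [hβι]; infer_instance
    exact mono_of_mono (β n) (fι f n)
  -- the epimorphisms of the bi-chain
  have hsq : ∀ n, CommSq (fp f (n + 1)) (fp f n) (fι f (n + 1))
      (fι f n ≫ (f : X ⟶ X)) := by
    intro n
    constructor
    rw [fp_fι, ← Category.assoc, fp_fι, pow_succ', End.mul_def]
  haveI : ∀ n, StrongEpi (fp f n) := fun n => strongEpi_of_epi _
  let α : ∀ n, fObj f n ⟶ fObj f (n + 1) := fun n => (hsq n).lift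
  have hαp : ∀ n, fp f n ≫ α n = fp f (n + 1) := fun n => (hsq n).fac_left
  have hαι : ∀ n, α n ≫ fι f (n + 1) = fι f n ≫ (f : X ⟶ X) := fun n => (hsq n).fac_right
  have hα : ∀ n, Epi (α n) := by
    intro n
    have : Epi (fp f n ≫ α n) := by rw [hαp]; infer_instance
    exact epi_of_epi (fp f n) (α n)
  -- apply the bi-chain condition
  obtain ⟨n₀, hn⟩ := h (fObj f) α β rfl hα hβ
  set n : ℕ := n₀ + 1 with hn_def
  obtain ⟨hiα, hiβ⟩ := hn n (Nat.le_succ n₀)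
  haveI : IsIso (α n) := hiα
  haveI : IsIso (β n) := hiβ
  set γ : End (fObj f n) := α n ≫ β n with hγ_def
  haveI hγiso : IsIso (γ : fObj f n ⟶ fObj f n) := by
    dsimp [γ]; infer_instance
  have hγι : (γ : fObj f n ⟶ fObj f n) ≫ fι f n = fι f n ≫ (f : X ⟶ X) := by
    dsimp [γ]
    rw [Category.assoc, hβι, hαι]
  -- powers of γ
  have hGι : ∀ k : ℕ, ((γ ^ k : End (fObj f n)) : fObj f n ⟶ fObj f n) ≫ fι f n
      = fι f n ≫ ((f ^ k : End X) : X ⟶ X) := by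
    intro k
    induction k with
    | zero => simp [pow_zero, End.one_def]
    | succ k ih =>
        have h1 : ((γ ^ (k + 1) : End (fObj f n)) : fObj f n ⟶ fObj f n)
            = (γ : fObj f n ⟶ fObj f n) ≫ ((γ ^ k : End (fObj f n)) : _ ⟶ _) := by
          rw [pow_succ, End.mul_def]
        have h2 : ((f ^ (k + 1) : End X) : X ⟶ X)
            = (f : X ⟶ X) ≫ ((f ^ k : End X) : X ⟶ X) := by
          rw [pow_succ, End.mul_def]
        rw [h1, h2, Category.assoc, ih, ← Category.assoc, hγι, Category.assoc]
  have hGiso : ∀ k : ℕ, IsIso ((γ ^ k : End (fObj f n)) : fObj f n ⟶ fObj f n) := by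
    intro k
    induction k with
    | zero =>
        rw [pow_zero]
        change IsIso (𝟙 (fObj f n))
        infer_instance
    | succ k ih =>
        rw [pow_succ, End.mul_def]
        exact @IsIso.comp_isIso _ _ _ _ _ _ _ hγiso ih
  set G : fObj f n ⟶ fObj f n := ((γ ^ n : End (fObj f n)) : fObj f n ⟶ fObj f n)
    with hG_def
  haveI : IsIso G := hGiso n
  have hιp : fι f n ≫ fp f n = G := by
    rw [← cancel_mono (fι f n), Category.assoc, fp_fι, hG_def, hGι]
  -- the idempotent
  set e : X ⟶ X := fp f n ≫ inv G ≫ fι f n with he_def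
  have he : e ≫ e = e := by
    rw [he_def]
    simp only [Category.assoc]
    rw [← Category.assoc (fι f n) (fp f n), hιp]
    simp
  rcases aux_idem_eq_zero_or_id hX e he with h0 | h1
  · -- e = 0 : f is nilpotent
    right
    have hg0 : inv G ≫ fι f n = 0 := by
      rw [← cancel_epi (fp f n), comp_zero, ← Category.assoc]
      simpa [he_def] using h0
    have hι0 : fι f n = 0 := by
      have : G ≫ inv G ≫ fι f n = 0 := by rw [hg0, comp_zero]
      simpa using this
    have hfn : ((f ^ n : End X) : X ⟶ X) = 0 := by
      rw [← fp_fι, hι0, comp_zero]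
    exact IsNilpotent.isUnit_one_sub ⟨n, hfn⟩
  · -- e = 𝟙 : f is an isomorphism
    left
    haveI hpiso : IsIso (fp f n) := by
      refine ⟨inv G ≫ fι f n, ?_, ?_⟩
      · rw [← he_def]; exact h1
      · rw [Category.assoc, hιp, IsIso.inv_hom_id]
    haveI hιiso : IsIso (fι f n) := by
      refine ⟨fp f n ≫ inv G, ?_, ?_⟩
      · rw [← Category.assoc, hιp, IsIso.hom_inv_id]
      · rw [Category.assoc, ← he_def]; exact h1
    haveI hfniso : IsIso ((f ^ n : End X) : X ⟶ X) := by
      rw [← fp_fι]; infer_instance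
    have hs : ((f ^ n : End X) : X ⟶ X)
        = (f : X ⟶ X) ≫ ((f ^ n₀ : End X) : X ⟶ X) := by
      rw [hn_def, pow_succ, End.mul_def]
    have hs' : ((f ^ n : End X) : X ⟶ X)
        = ((f ^ n₀ : End X) : X ⟶ X) ≫ (f : X ⟶ X) := by
      rw [hn_def, pow_succ', End.mul_def]
    haveI : Mono ((f : X ⟶ X) ≫ ((f ^ n₀ : End X) : X ⟶ X)) := by
      rw [← hs]; infer_instance
    haveI : Epi (((f ^ n₀ : End X) : X ⟶ X) ≫ (f : X ⟶ X)) := by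
      rw [← hs']; infer_instance
    haveI : Mono (f : X ⟶ X) := mono_of_mono (f : X ⟶ X) ((f ^ n₀ : End X) : X ⟶ X)
    haveI : Epi (f : X ⟶ X) := epi_of_epi ((f ^ n₀ : End X) : X ⟶ X) (f : X ⟶ X)
    haveI : IsIso (f : X ⟶ X) := isIso_of_mono_of_epi _
    exact ⟨⟨f, inv (f : X ⟶ X), IsIso.inv_hom_id _, IsIso.hom_inv_id _⟩, rfl⟩

end Aux

/-- An object of an abelian category satisfying the bi-chain condition is indecomposable
if and only if its endomorphism ring is local. -/
theorem indecomposable_iff_isLocalRing_end {A : Type u} [Category.{v} A] [Abelian A]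
    (X : A) (h : BichainCondition X) :
    Indecomposable X ↔ IsLocalRing (End X) := by
  constructor
  · intro hX
    haveI : Nontrivial (End X) := by
      refine ⟨⟨1, 0, fun h01 => hX.1 ?_⟩⟩
      rw [IsZero.iff_id_eq_zero]
      exact h01
    refine ⟨fun {a b} hab => ?_⟩
    rcases aux_isUnit_or h hX a with ha | ha
    · exact Or.inl ha
    · right
      have : b = 1 - a := eq_sub_of_add_eq' hab
      rw [this]
      exact ha
  · intro hL
    constructor
    · intro hz
      exact one_ne_zero (α := End X) (hz.eq_of_src (𝟙 X) 0)
    · intro Y Z i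
      set e₁ : End X := i.hom ≫ biprod.fst ≫ biprod.inl ≫ i.inv with he₁
      set e₂ : End X := i.hom ≫ biprod.snd ≫ biprod.inr ≫ i.inv with he₂
      have hsum : e₁ + e₂ = 1 := by
        show (e₁ : X ⟶ X) + e₂ = 𝟙 X
        rw [he₁, he₂]
        have htot : biprod.fst ≫ biprod.inl ≫ i.inv + biprod.snd ≫ biprod.inr ≫ i.inv
            = i.inv := by
          rw [← Category.assoc, ← Category.assoc, ← Preadditive.add_comp, biprod.total,
            Category.id_comp]
        rw [← Preadditive.comp_add, htot, i.hom_inv_id]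
      rcases IsLocalRing.isUnit_or_isUnit_of_add_one hsum with hu | hu
      · right
        have hidem : e₁ * e₁ = e₁ := by
          show (e₁ : X ⟶ X) ≫ e₁ = e₁
          rw [he₁]
          simp
        have h1 : e₁ = 1 := hu.mul_left_cancel (by rw [hidem, mul_one])
        have h2 : e₂ = 0 := by
          have h3 : e₂ = 1 - e₁ := eq_sub_of_add_eq' hsum
          rw [h3, h1, sub_self]
        have h4 : biprod.snd ≫ biprod.inr = (0 : Y ⊞ Z ⟶ Y ⊞ Z) := by
          have h5 : i.inv ≫ (e₂ : X ⟶ X) ≫ i.hom = biprod.snd ≫ biprod.inr := by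
            rw [he₂]; simp
          rw [← h5, show (e₂ : X ⟶ X) = 0 from h2]
          simp
        rw [IsZero.iff_id_eq_zero]
        have h6 : (𝟙 Z : Z ⟶ Z)
            = (biprod.inr : Z ⟶ Y ⊞ Z) ≫ ((biprod.snd : Y ⊞ Z ⟶ Z)
              ≫ (biprod.inr : Z ⟶ Y ⊞ Z)) ≫ (biprod.snd : Y ⊞ Z ⟶ Z) := by simp
        rw [h6, h4, zero_comp, comp_zero]
      · left
        have hidem : e₂ * e₂ = e₂ := by
          show (e₂ : X ⟶ X) ≫ e₂ = e₂
          rw [he₂]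
          simp
        have h1 : e₂ = 1 := hu.mul_left_cancel (by rw [hidem, mul_one])
        have h2 : e₁ = 0 := by
          have h3 : e₁ = 1 - e₂ := eq_sub_of_add_eq hsum
          rw [h3, h1, sub_self]
        have h4 : biprod.fst ≫ biprod.inl = (0 : Y ⊞ Z ⟶ Y ⊞ Z) := by
          have h5 : i.inv ≫ (e₁ : X ⟶ X) ≫ i.hom = biprod.fst ≫ biprod.inl := by
            rw [he₁]; simp
          rw [← h5, show (e₁ : X ⟶ X) = 0 from h2]
          simp
        rw [IsZero.iff_id_eq_zero]
        have h6 : (𝟙 Y : Y ⟶ Y)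
            = (biprod.inl : Y ⟶ Y ⊞ Z) ≫ ((biprod.fst : Y ⊞ Z ⟶ Y)
              ≫ (biprod.inl : Y ⟶ Y ⊞ Z)) ≫ (biprod.fst : Y ⊞ Z ⟶ Y) := by simp
        rw [h6, h4, zero_comp, comp_zero]
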